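/- In any valid farthest-point iteration u_0 = 0, u_{i+1} = u_i + χ_i on a finite set X of unit vectors in R^2 with 0 ∈ conv(X), if ‖u_i‖ > √2 and ‖u_{i-1}‖ ≤ √2 for some i ≥ 1, then the angle γ_{i-1} between u_{i-1} and χ_{i-1} satisfies π/2 + φ ≤ γ_{i-1} ≤ 2π/3 where π - 2φ is the largest angular gap between consecutive points of X; consequently X has an angular gap strictly greater than 2π/3. -/

import Mathlib

open scoped RealInnerProductSpace

set_option maxHeartbeats 1000000 in
/-- In a valid farthest-point iteration on a finite set `X ⊆ S¹ ⊆ ℝ²` spanning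
`ℝ²` with `0 ∈ conv X` and largest angular gap `π - 2φ` (expressed as: `π - 2φ` is the greatest
`g` such that some unit direction `w` has all points of `X` at angle `≥ g/2` from it), if
`‖u i‖ > √2` and `‖u (i-1)‖ ≤ √2` for some `i ≥ 1`, then the angle `γ` between `u (i-1)` and
`χ (i-1)` satisfies `π/2 + φ ≤ γ ≤ 2π/3`; consequently `X` has a gap greater than `2π/3`,
i.e. `π - 2φ > 2π/3`. -/
theorem stmt19 (X : Finset (EuclideanSpace ℝ (Fin 2)))
    (hunit : ∀ x ∈ X, ‖x‖ = 1)
    (hspan : Submodule.span ℝ (X : Set (EuclideanSpace ℝ (Fin 2))) = ⊤)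
    (h0 : (0 : EuclideanSpace ℝ (Fin 2)) ∈ convexHull ℝ (X : Set (EuclideanSpace ℝ (Fin 2))))
    (φ : ℝ) (hφ0 : 0 ≤ φ) (hφ : φ < Real.pi / 2)
    (hgap : IsGreatest {g : ℝ | ∃ w : EuclideanSpace ℝ (Fin 2), ‖w‖ = 1 ∧
      ∀ x ∈ X, g / 2 ≤ InnerProductGeometry.angle w x} (Real.pi - 2 * φ))
    (u χ : ℕ → EuclideanSpace ℝ (Fin 2)) (hu0 : u 0 = 0)
    (hstep : ∀ j, χ j ∈ X ∧ (∀ x ∈ X, ⟪χ j, u j⟫ ≤ ⟪x, u j⟫) ∧ u (j + 1) = u j + χ j)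
    (i : ℕ) (hi : 1 ≤ i)
    (hbig : Real.sqrt 2 < ‖u i‖) (hsmall : ‖u (i - 1)‖ ≤ Real.sqrt 2) :
    (Real.pi / 2 + φ ≤ InnerProductGeometry.angle (u (i - 1)) (χ (i - 1)) ∧
      InnerProductGeometry.angle (u (i - 1)) (χ (i - 1)) ≤ 2 * Real.pi / 3) ∧
    2 * Real.pi / 3 < Real.pi - 2 * φ := by
  have hpi := Real.pi_pos
  set j := i - 1 with hj
  obtain ⟨hcX, hmin, hstepeq⟩ := hstep j
  have hji : j + 1 = i := by omega
  set v := u j with hv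
  set c := χ j with hc
  have hui : u i = v + c := by rw [← hji]; exact hstepeq
  have hcn : ‖c‖ = 1 := hunit c hcX
  set lam := ‖v‖ with hlam
  have hlam0 : 0 ≤ lam := norm_nonneg _
  have hlamsq : lam ^ 2 ≤ 2 := by
    nlinarith [Real.sq_sqrt (by norm_num : (2:ℝ) ≥ 0), Real.sqrt_nonneg 2]
  have hbig2 : 2 < ‖u i‖ ^ 2 := by
    nlinarith [Real.sq_sqrt (by norm_num : (2:ℝ) ≥ 0), Real.sqrt_nonneg 2, norm_nonneg (u i)]
  have hexp : ‖u i‖ ^ 2 = lam ^ 2 + 2 * ⟪v, c⟫ + 1 := by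
    rw [hui, norm_add_sq_real, hcn]; ring
  obtain ⟨t, ht⟩ : ∃ t : ℝ, ⟪v, c⟫ = t := ⟨_, rfl⟩
  rw [ht] at hexp
  -- v ≠ 0
  have hvne : v ≠ 0 := by
    intro h
    have h1 : ‖u i‖ = 1 := by rw [hui, h, zero_add, hcn]
    rw [h1] at hbig2
    linarith
  have hlampos : 0 < lam := norm_pos_iff.mpr hvne
  set γ := InnerProductGeometry.angle v c with hγ
  have hγ0 : 0 ≤ γ := InnerProductGeometry.angle_nonneg v c
  have hγpi : γ ≤ Real.pi := InnerProductGeometry.angle_le_pi v c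
  have hcosγ : Real.cos γ = t / lam := by
    rw [hγ, InnerProductGeometry.cos_angle, hcn, mul_one, ht]
  -- upper bound: cos γ > -1/2
  have hinner_lb : -(lam / 2) < t := by nlinarith
  have hcos_gt : Real.cos (2 * Real.pi / 3) < Real.cos γ := by
    have h23 : Real.cos (2 * Real.pi / 3) = -(1/2) := by
      have : (2 : ℝ) * Real.pi / 3 = Real.pi - Real.pi / 3 := by ring
      rw [this, Real.cos_pi_sub, Real.cos_pi_div_three]
    rw [h23, hcosγ, lt_div_iff₀ hlampos]
    linarith
  have hγlt : γ < 2 * Real.pi / 3 := by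
    by_contra h
    push_neg at h
    have h2 : Real.cos γ ≤ Real.cos (2 * Real.pi / 3) :=
      Real.cos_le_cos_of_nonneg_of_le_pi (by linarith) hγpi h
    linarith
  -- lower bound via the gap hypothesis
  have hlow : Real.pi / 2 + φ ≤ γ := by
    -- pick the point of X closest in angle to w := -(lam⁻¹ • v)
    set w : EuclideanSpace ℝ (Fin 2) := -(lam⁻¹ • v) with hw
    have hwn : ‖w‖ = 1 := by
      rw [hw, norm_neg, norm_smul, norm_inv, Real.norm_eq_abs, abs_of_pos hlampos]
      field_simp
      exact hlam.symm
    obtain ⟨x₀, hx₀X, hx₀min⟩ := X.exists_min_image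
      (fun x => InnerProductGeometry.angle w x) ⟨c, hcX⟩
    have hmem : (2 * InnerProductGeometry.angle w x₀) ∈ {g : ℝ | ∃ w : EuclideanSpace ℝ (Fin 2),
        ‖w‖ = 1 ∧ ∀ x ∈ X, g / 2 ≤ InnerProductGeometry.angle w x} := by
      exact ⟨w, hwn, fun x hx => by
        have := hx₀min x hx; simpa using this⟩
    have hle : 2 * InnerProductGeometry.angle w x₀ ≤ Real.pi - 2 * φ := hgap.2 hmem
    have hangle_eq : InnerProductGeometry.angle w x₀ =
        Real.pi - InnerProductGeometry.angle v x₀ := by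
      rw [hw, InnerProductGeometry.angle_neg_left,
        InnerProductGeometry.angle_smul_left_of_pos _ _ (inv_pos.mpr hlampos)]
    have hax₀ : Real.pi / 2 + φ ≤ InnerProductGeometry.angle v x₀ := by
      rw [hangle_eq] at hle; linarith
    -- inner product bound for x₀
    have hx₀n : ‖x₀‖ = 1 := hunit x₀ hx₀X
    obtain ⟨s, hs⟩ : ∃ s : ℝ, ⟪v, x₀⟫ = s := ⟨_, rfl⟩
    have hcosx₀ : Real.cos (InnerProductGeometry.angle v x₀) = s / lam := by
      rw [InnerProductGeometry.cos_angle, hx₀n, mul_one, hs]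
    have hcosle : Real.cos (InnerProductGeometry.angle v x₀) ≤ Real.cos (Real.pi / 2 + φ) :=
      Real.cos_le_cos_of_nonneg_of_le_pi (by linarith)
        (InnerProductGeometry.angle_le_pi v x₀) hax₀
    have hsin : Real.cos (Real.pi / 2 + φ) = -Real.sin φ := by
      rw [Real.cos_add, Real.cos_pi_div_two, Real.sin_pi_div_two]; ring
    have hinx₀ : s ≤ -lam * Real.sin φ := by
      rw [hcosx₀, hsin, div_le_iff₀ hlampos] at hcosle
      linarith
    have hinc : t ≤ -lam * Real.sin φ := by
      have h1 : ⟪c, v⟫ ≤ ⟪x₀, v⟫ := hmin x₀ hx₀X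
      have e1 : ⟪c, v⟫ = t := by rw [real_inner_comm]; exact ht
      have e2 : ⟪x₀, v⟫ = s := by rw [real_inner_comm]; exact hs
      linarith
    have hcosle2 : Real.cos γ ≤ Real.cos (Real.pi / 2 + φ) := by
      rw [hcosγ, hsin, div_le_iff₀ hlampos]
      linarith
    by_contra h
    push_neg at h
    have := Real.cos_lt_cos_of_nonneg_of_le_pi hγ0 (by linarith) h
    linarith
  refine ⟨⟨hlow, le_of_lt hγlt⟩, ?_⟩
  linarith
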